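/- Let $\bar C$ be the completion of $C$ with respect to a possible context $\{X_K=x_K\}$ (so $\bar c_{kh}=x_k/x_h$ for $k,h\in K^\ast$), and let $\bar C^\ast$ be the Kleene star of $\bar C$. Then for all $k,h\in K^\ast$ one has $\bar c^\ast_{kh}=\bar c_{kh}=x_k/x_h$. -/

import Mathlib

open scoped NNReal

noncomputable section

/-- Max-times matrix-vector product: `(A ⊙ x) i = max_j (A i j * x j)`. -/
def maxMul {d : ℕ} (A : Matrix (Fin d) (Fin d) ℝ≥0) (x : Fin d → ℝ≥0) : Fin d → ℝ≥0 :=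
  fun i => Finset.univ.sup fun j => A i j * x j

/-- Max-times matrix product. -/
def maxMatMul {d : ℕ} (A B : Matrix (Fin d) (Fin d) ℝ≥0) : Matrix (Fin d) (Fin d) ℝ≥0 :=
  Matrix.of fun i j => Finset.univ.sup fun l => A i l * B l j

/-- Max-times matrix powers, with `A^{⊙0}` the identity matrix. -/
def maxPow {d : ℕ} (A : Matrix (Fin d) (Fin d) ℝ≥0) : ℕ → Matrix (Fin d) (Fin d) ℝ≥0
  | 0 => Matrix.of fun i j => if i = j then 1 else 0
  | k + 1 => maxMatMul A (maxPow A k)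

/-- Kleene star `C^* = I ∨ C ∨ C^{⊙2} ∨ ⋯ ∨ C^{⊙(d-1)}` over the max-times semiring. -/
def kleene {d : ℕ} (C : Matrix (Fin d) (Fin d) ℝ≥0) : Matrix (Fin d) (Fin d) ℝ≥0 :=
  Matrix.of fun i j => (Finset.range d).sup fun k => maxPow C k i j

/-- The support digraph of `C` (edge `j → i` iff `C i j ≠ 0`) has no directed cycle. -/
def SupportAcyclic {d : ℕ} (C : Matrix (Fin d) (Fin d) ℝ≥0) : Prop :=
  ¬ ∃ (r : ℕ) (c : Fin (r + 1) → Fin d), Function.Injective c ∧ ∀ t, C (c (t + 1)) (c t) ≠ 0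

/-- Weight of the directed cycle `c 0 → c 1 → ⋯ → c r → c 0`
(the edge `j → i` contributes the entry `A i j`). -/
def cycleWeight {d : ℕ} (A : Matrix (Fin d) (Fin d) ℝ≥0) {r : ℕ}
    (c : Fin (r + 1) → Fin d) : ℝ≥0 :=
  ∏ t, A (c (t + 1)) (c t)

/-- Maximum cycle mean: the supremum of the geometric means of the weights of
(simple) directed cycles of the digraph of `A`; it is `0` when this digraph is acyclic. -/
noncomputable def maxCycleMean {d : ℕ} (A : Matrix (Fin d) (Fin d) ℝ≥0) : ℝ≥0 :=
  sSup {m | ∃ (r : ℕ) (c : Fin (r + 1) → Fin d),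
    Function.Injective c ∧ m = cycleWeight A c ^ (((r : ℝ) + 1)⁻¹)}

/-- The completion of `C` with respect to a context with constant-node set `Ks` and constant
values `x`: `c̄_{ij} = x i / x j` if `i, j ∈ Ks`, and `c̄_{ij} = c_{ij}` otherwise. -/
def completionMatrix {d : ℕ} (C : Matrix (Fin d) (Fin d) ℝ≥0) (Ks : Finset (Fin d))
    (x : Fin d → ℝ≥0) : Matrix (Fin d) (Fin d) ℝ≥0 :=
  Matrix.of fun i j => if i ∈ Ks ∧ j ∈ Ks then x i / x j else C i j

-- helper: sup * c ≤ b
lemma sup_mul_le' {α : Type*} (s : Finset α) (f : α → ℝ≥0) (c b : ℝ≥0)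
    (h : ∀ a ∈ s, f a * c ≤ b) : s.sup f * c ≤ b := by
  rcases s.eq_empty_or_nonempty with rfl | hs
  · simp
  · obtain ⟨a, ha, hEq⟩ := Finset.exists_mem_eq_sup s hs f
    rw [hEq]; exact h a ha

lemma maxPow_zero_apply {d : ℕ} (C : Matrix (Fin d) (Fin d) ℝ≥0) (i j : Fin d) :
    maxPow C 0 i j = if i = j then 1 else 0 := rfl

lemma maxPow_succ_apply {d : ℕ} (C : Matrix (Fin d) (Fin d) ℝ≥0) (n : ℕ) (i j : Fin d) :
    maxPow C (n+1) i j = Finset.univ.sup fun l => C i l * maxPow C n l j := rfl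

lemma maxPow_ne_zero_walk {d : ℕ} (C : Matrix (Fin d) (Fin d) ℝ≥0) :
    ∀ (n : ℕ) (i j : Fin d), maxPow C n i j ≠ 0 →
    ∃ p : ℕ → Fin d, p 0 = j ∧ p n = i ∧ ∀ t < n, C (p (t+1)) (p t) ≠ 0 := by
  intro n
  induction n with
  | zero =>
    intro i j hne
    rw [maxPow_zero_apply] at hne
    have : i = j := by by_contra hij; simp [hij] at hne
    exact ⟨fun _ => j, rfl, by simp [this], fun t ht => absurd ht (by omega)⟩
  | succ n ih =>
    intro i j hne
    rw [maxPow_succ_apply] at hne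
    have : ∃ l, C i l * maxPow C n l j ≠ 0 := by
      by_contra hall
      push_neg at hall
      have : (Finset.univ.sup fun l => C i l * maxPow C n l j) = 0 :=
        le_antisymm (Finset.sup_le fun l _ => le_of_eq (hall l)) zero_le
      exact hne this
    obtain ⟨l, hl⟩ := this
    have hCil : C i l ≠ 0 := fun h0 => hl (by simp [h0])
    have hMP : maxPow C n l j ≠ 0 := fun h0 => hl (by simp [h0])
    obtain ⟨p, hp0, hpn, hpe⟩ := ih l j hMP
    refine ⟨fun t => if t = n + 1 then i else p t, by simp [hp0], by simp, ?_⟩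
    intro t ht
    rcases Nat.lt_or_ge t n with h1 | h1
    · simpa [Nat.ne_of_lt (by omega : t + 1 < n + 1), Nat.ne_of_lt (by omega : t < n + 1),
        Nat.ne_of_lt h1]
        using hpe t h1
    · have ht' : t = n := by omega
      subst ht'
      simpa [(by omega : t ≠ t + 1), hpn] using hCil

lemma closed_walk_false {d : ℕ} (C : Matrix (Fin d) (Fin d) ℝ≥0) (hC : SupportAcyclic C) :
    ∀ (m : ℕ), 0 < m → ∀ p : ℕ → Fin d, p m = p 0 →
      (∀ t < m, C (p (t+1)) (p t) ≠ 0) → False := by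
  intro m
  induction m using Nat.strong_induction_on with
  | _ m ih =>
  intro hm p hclosed hedges
  by_cases hinj : ∀ a b, a < m → b < m → p a = p b → a = b
  · -- build a simple cycle
    obtain ⟨r, rfl⟩ : ∃ r, m = r + 1 := ⟨m - 1, by omega⟩
    refine hC ⟨r, fun t => p t.val, ?_, ?_⟩
    · intro a b hab
      exact Fin.ext (hinj a.val b.val a.isLt b.isLt hab)
    · intro t
      have hval : ((t + 1 : Fin (r+1)) : ℕ) = (t.val + 1) % (r + 1) := by
        simp [Fin.add_def]
      show C (p ((t + 1 : Fin (r+1)) : ℕ)) (p t.val) ≠ 0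
      rcases Nat.lt_or_ge t.val r with h1 | h1
      · have : ((t + 1 : Fin (r+1)) : ℕ) = t.val + 1 := by
          rw [hval, Nat.mod_eq_of_lt (by omega)]
        rw [this]
        exact hedges t.val (by omega)
      · have htv : t.val = r := by omega
        have : ((t + 1 : Fin (r+1)) : ℕ) = 0 := by
          rw [hval, htv]; simp
        rw [this, htv]
        have := hedges r (by omega)
        rwa [hclosed] at this
  · push_neg at hinj
    obtain ⟨a, b, ha, hb, hab, hne⟩ := hinj
    -- wlog a < b
    rcases Nat.lt_or_ge a b with hlt | hge
    · exact ih (b - a) (by omega) (by omega) (fun u => p (a + u))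
        (by show p (a + (b - a)) = p (a + 0); rw [show a + (b - a) = b by omega]; exact hab.symm)
        (fun t ht => by
          have := hedges (a + t) (by omega)
          rwa [show a + t + 1 = a + (t+1) by omega] at this)
    · have hlt : b < a := by omega
      exact ih (a - b) (by omega) (by omega) (fun u => p (b + u))
        (by show p (b + (a - b)) = p (b + 0); rw [show b + (a - b) = a by omega]; exact hab)
        (fun t ht => by
          have := hedges (b + t) (by omega)
          rwa [show b + t + 1 = b + (t+1) by omega] at this)

lemma maxPow_d_zero {d : ℕ} (C : Matrix (Fin d) (Fin d) ℝ≥0) (hC : SupportAcyclic C)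
    (i j : Fin d) : maxPow C d i j = 0 := by
  by_contra hne
  obtain ⟨p, hp0, hpn, hpe⟩ := maxPow_ne_zero_walk C d i j hne
  -- pigeonhole on p restricted to Fin (d+1)
  have hcard : Fintype.card (Fin d) < Fintype.card (Fin (d+1)) := by simp
  obtain ⟨a, b, hne', hab⟩ := Fintype.exists_ne_map_eq_of_card_lt
    (fun t : Fin (d+1) => p t.val) hcard
  have havb : a.val ≠ b.val := fun h => hne' (Fin.ext h)
  rcases Nat.lt_or_ge a.val b.val with hlt | hge
  · exact closed_walk_false C hC (b.val - a.val) (by omega) (fun u => p (a.val + u))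
      (by show p (a.val + (b.val - a.val)) = p (a.val + 0)
          rw [show a.val + (b.val - a.val) = b.val by omega]; exact hab.symm)
      (fun t ht => by
        have := hpe (a.val + t) (by omega)
        rwa [show a.val + t + 1 = a.val + (t+1) by omega] at this)
  · have hlt : b.val < a.val := by omega
    exact closed_walk_false C hC (a.val - b.val) (by omega) (fun u => p (b.val + u))
      (by show p (b.val + (a.val - b.val)) = p (b.val + 0)
          rw [show b.val + (a.val - b.val) = a.val by omega]; exact hab)
      (fun t ht => by
        have := hpe (b.val + t) (by omega)
        rwa [show b.val + t + 1 = b.val + (t+1) by omega] at this)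

lemma kleene_apply {d : ℕ} (C : Matrix (Fin d) (Fin d) ℝ≥0) (i j : Fin d) :
    kleene C i j = (Finset.range d).sup fun k => maxPow C k i j := rfl

lemma maxPow_le_kleene {d : ℕ} (C : Matrix (Fin d) (Fin d) ℝ≥0) {n : ℕ} (hn : n < d)
    (i j : Fin d) : maxPow C n i j ≤ kleene C i j :=
  Finset.le_sup (f := fun k => maxPow C k i j) (Finset.mem_range.mpr hn)

lemma comp_le_kleene {d : ℕ} (C : Matrix (Fin d) (Fin d) ℝ≥0) (hC : SupportAcyclic C)
    (i j h : Fin d) : C i j * kleene C j h ≤ kleene C i h := by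
  rw [kleene_apply C j h, NNReal.mul_finset_sup]
  apply Finset.sup_le
  intro n hn
  rw [Finset.mem_range] at hn
  have step : C i j * maxPow C n j h ≤ maxPow C (n+1) i h := by
    rw [maxPow_succ_apply]
    exact Finset.le_sup (f := fun l => C i l * maxPow C n l h) (Finset.mem_univ j)
  rcases Nat.lt_or_ge (n+1) d with h1 | h1
  · exact step.trans (maxPow_le_kleene C h1 i h)
  · have : n + 1 = d := by omega
    rw [this] at step
    rw [maxPow_d_zero C hC i h] at step
    exact step.trans zero_le


/-- For the completion `C̄` of `C` with respect to a possible context, the Kleene star of `C̄`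
agrees with `C̄` on the constant nodes: `c̄^*_{kh} = c̄_{kh} = x k / x h` for `k, h ∈ Ks`. -/
theorem stmt16 {d : ℕ} (C : Matrix (Fin d) (Fin d) ℝ≥0) (hC : SupportAcyclic C)
    (Ks : Finset (Fin d)) (x : Fin d → ℝ≥0) (hKs : Ks.Nonempty)
    (hx : ∀ k ∈ Ks, 0 < x k)
    (hfeas : ∀ r ∈ Ks, ∀ l ∈ Ks, kleene C r l * x l ≤ x r)
    (k h : Fin d) (hk : k ∈ Ks) (hh : h ∈ Ks) :
    kleene (completionMatrix C Ks x) k h = completionMatrix C Ks x k h ∧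
    kleene (completionMatrix C Ks x) k h = x k / x h := by
  have hxk := hx k hk
  have hxh := hx h hh
  set B := completionMatrix C Ks x with hB
  have hBkh : B k h = x k / x h := by simp [hB, completionMatrix, hk, hh]
  set v : Fin d → ℝ≥0 :=
    fun i => if i ∈ Ks then x i else Ks.sup (fun l => kleene C i l * x l) with hv
  have hCle : ∀ (i j : Fin d), i ≠ j → C i j ≤ kleene C i j := by
    intro i j hij
    have hd2 : 1 < d := by
      have h1 := i.isLt
      have h2 := j.isLt
      have h3 : i.val ≠ j.val := fun e => hij (Fin.ext e)
      omega
    have h1 : C i j * maxPow C 0 j j ≤ maxPow C 1 i j :=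
      Finset.le_sup (f := fun l => C i l * maxPow C 0 l j) (Finset.mem_univ j)
    rw [maxPow_zero_apply] at h1
    simp at h1
    exact h1.trans (maxPow_le_kleene C hd2 i j)
  have hstep : ∀ i j, B i j * v j ≤ v i := by
    intro i j
    by_cases hi : i ∈ Ks <;> by_cases hj : j ∈ Ks
    · simp only [hv, hB, completionMatrix, Matrix.of_apply, hi, hj, and_self, if_true]
      rw [div_mul_cancel₀ _ (hx j hj).ne']
    · simp only [hv, hB, completionMatrix, Matrix.of_apply, hi, hj, and_false, if_false,
        if_true, if_pos hi]
      rw [NNReal.mul_finset_sup]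
      apply Finset.sup_le
      intro l hl
      calc C i j * (kleene C j l * x l) ≤ kleene C i l * x l := by
            rw [← mul_assoc]
            exact mul_le_mul_left (comp_le_kleene C hC i j l) _
        _ ≤ x i := hfeas i hi l hl
    · simp only [hv, hB, completionMatrix, Matrix.of_apply, hi, hj, false_and, if_false,
        if_true, if_neg hi, if_pos hj]
      have hij : i ≠ j := fun e => hi (e ▸ hj)
      calc C i j * x j ≤ kleene C i j * x j := mul_le_mul_left (hCle i j hij) _
        _ ≤ Ks.sup (fun l => kleene C i l * x l) :=
            Finset.le_sup (f := fun l => kleene C i l * x l) hj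
    · simp only [hv, hB, completionMatrix, Matrix.of_apply, hi, hj, false_and, if_false,
        if_neg hi, if_neg hj]
      rw [NNReal.mul_finset_sup]
      apply Finset.sup_le
      intro l hl
      calc C i j * (kleene C j l * x l) ≤ kleene C i l * x l := by
            rw [← mul_assoc]
            exact mul_le_mul_left (comp_le_kleene C hC i j l) _
        _ ≤ Ks.sup (fun l => kleene C i l * x l) :=
            Finset.le_sup (f := fun l => kleene C i l * x l) hl
  have hiter : ∀ n (i j : Fin d), maxPow B n i j * v j ≤ v i := by
    intro n
    induction n with
    | zero =>
      intro i j
      rw [maxPow_zero_apply]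
      rcases eq_or_ne i j with rfl | hne
      · simp
      · simp [hne]
    | succ n ih =>
      intro i j
      rw [maxPow_succ_apply]
      apply sup_mul_le'
      intro l _
      calc B i l * maxPow B n l j * v j = B i l * (maxPow B n l j * v j) := mul_assoc _ _ _
        _ ≤ B i l * v l := mul_le_mul_right (ih l j) _
        _ ≤ v i := hstep i l
  have hvk : v k = x k := by simp [hv, hk]
  have hvh : v h = x h := by simp [hv, hh]
  have hupper : kleene B k h ≤ x k / x h := by
    rw [kleene_apply]
    apply Finset.sup_le
    intro n _
    rw [le_div_iff₀ hxh]
    have := hiter n k h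
    rwa [hvk, hvh] at this
  have hlower : x k / x h ≤ kleene B k h := by
    rw [← hBkh]
    rcases eq_or_ne k h with rfl | hne
    · have hd0 : 0 < d := k.pos
      have : maxPow B 0 k k ≤ kleene B k k := maxPow_le_kleene B hd0 k k
      rw [maxPow_zero_apply] at this
      simp only [if_pos rfl] at this
      rw [hBkh]
      rw [div_self hxk.ne']
      exact this
    · have hd2 : 1 < d := by
        have h1 := k.isLt
        have h2 := h.isLt
        have h3 : k.val ≠ h.val := fun e => hne (Fin.ext e)
        omega
      have h1 : B k h * maxPow B 0 h h ≤ maxPow B 1 k h :=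
        Finset.le_sup (f := fun l => B k l * maxPow B 0 l h) (Finset.mem_univ h)
      rw [maxPow_zero_apply] at h1
      simp at h1
      exact h1.trans (maxPow_le_kleene B hd2 k h)
  have heq : kleene B k h = x k / x h := le_antisymm hupper hlower
  exact ⟨heq.trans hBkh.symm, heq⟩

end
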